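/- Let λ₂, λ₃ be real numbers with 0 < λ₂ < 1 < λ₃ and λ₂λ₃² > λ₃. Consider the diagonal matrix D = diag(λ₂, λ₃²) acting on ℝ². Then there exists an angle a > 0 such that R_a·D has two real eigenvalues μ₁, μ₂ with 1 < μ₁ < λ₃ < μ₂. -/

import Mathlib

open Real Matrix Polynomial

lemma charpoly_fin_two' (a b c d : ℝ) :
    (!![a, b; c, d] : Matrix (Fin 2) (Fin 2) ℝ).charpoly
      = X ^ 2 - C (a + d) * X + C (a * d - b * c) := by
  rw [Matrix.charpoly, Matrix.det_fin_two]
  simp only [charmatrix_apply_eq, charmatrix_apply_ne _ _ _ (by decide : (0 : Fin 2) ≠ 1),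
    charmatrix_apply_ne _ _ _ (by decide : (1 : Fin 2) ≠ 0), Matrix.cons_val', Matrix.cons_val_zero,
    Matrix.cons_val_one, Matrix.head_cons, Matrix.empty_val', Matrix.cons_val_fin_one,
    Matrix.head_fin_const]
  simp [C_add, C_mul]
  ring

lemma quad_factor (p q : ℝ) :
    (X ^ 2 - C (p + q) * X + C (p * q) : ℝ[X]) = (X - C p) * (X - C q) := by
  rw [C_add, C_mul]; ring

theorem stmt10 (l2 l3 : ℝ) (h2 : 0 < l2) (h21 : l2 < 1) (h3 : 1 < l3)
    (hprod : l3 < l2 * l3 ^ 2) :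
    ∃ a : ℝ, 0 < a ∧ ∃ μ₁ μ₂ : ℝ,
      ((!![cos a, -sin a; sin a, cos a] : Matrix (Fin 2) (Fin 2) ℝ)
          * !![l2, 0; 0, l3 ^ 2]).charpoly = (X - C μ₁) * (X - C μ₂) ∧
      1 < μ₁ ∧ μ₁ < l3 ∧ l3 < μ₂ := by
  have h3' : (0:ℝ) < l3 := by linarith
  have h23 : 1 < l2 * l3 := by nlinarith
  set μ₁ : ℝ := (1 + l2 * l3) / 2 with hμ₁def
  have hμ₁pos : 0 < μ₁ := by positivity
  have hμ₁gt1 : 1 < μ₁ := by rw [hμ₁def]; linarith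
  have hμ₁lt : μ₁ < l2 * l3 := by rw [hμ₁def]; linarith
  have hμ₁lt3 : μ₁ < l3 := by nlinarith
  set μ₂ : ℝ := l2 * l3 ^ 2 / μ₁ with hμ₂def
  have hμ₂gt : l3 < μ₂ := by
    rw [hμ₂def, lt_div_iff₀ hμ₁pos]; nlinarith
  have hμ₂pos : 0 < μ₂ := by linarith
  have hmul : μ₁ * μ₂ = l2 * l3 ^ 2 := by
    rw [hμ₂def]; field_simp
  have hden : 0 < l2 + l3 ^ 2 := by positivity
  have hsum : μ₁ + μ₂ < l2 + l3 ^ 2 := by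
    have key : (μ₁ - l2) * (l2 * l3 ^ 2 - μ₁ * l2) > 0 := by
      apply mul_pos <;> nlinarith
    rw [hμ₂def]
    rw [show μ₁ + l2 * l3 ^ 2 / μ₁ = (μ₁ * μ₁ + l2 * l3 ^ 2) / μ₁ by field_simp,
      div_lt_iff₀ hμ₁pos]
    nlinarith
  set c : ℝ := (μ₁ + μ₂) / (l2 + l3 ^ 2) with hcdef
  have hc0 : 0 < c := by positivity
  have hc1 : c < 1 := by rw [hcdef, div_lt_one hden]; exact hsum
  refine ⟨Real.arccos c, Real.arccos_pos.2 hc1, μ₁, μ₂, ?_, hμ₁gt1, hμ₁lt3, hμ₂gt⟩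
  have hcos : Real.cos (Real.arccos c) = c := Real.cos_arccos (by linarith) (by linarith)
  have hsin : Real.sin (Real.arccos c) ^ 2 = 1 - c ^ 2 := by
    have := Real.sin_sq_add_cos_sq (Real.arccos c)
    rw [hcos] at this; linarith
  rw [show ((!![Real.cos (Real.arccos c), -Real.sin (Real.arccos c);
      Real.sin (Real.arccos c), Real.cos (Real.arccos c)] : Matrix (Fin 2) (Fin 2) ℝ)
        * !![l2, 0; 0, l3 ^ 2]) =
      !![Real.cos (Real.arccos c) * l2, -Real.sin (Real.arccos c) * l3 ^ 2;
        Real.sin (Real.arccos c) * l2, Real.cos (Real.arccos c) * l3 ^ 2] by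
    simp [Matrix.mul_fin_two]]
  rw [charpoly_fin_two']
  have htr : Real.cos (Real.arccos c) * l2 + Real.cos (Real.arccos c) * l3 ^ 2 = μ₁ + μ₂ := by
    rw [hcos, hcdef]; field_simp
  have hdet : Real.cos (Real.arccos c) * l2 * (Real.cos (Real.arccos c) * l3 ^ 2)
      - -Real.sin (Real.arccos c) * l3 ^ 2 * (Real.sin (Real.arccos c) * l2) = μ₁ * μ₂ := by
    rw [hmul]
    have := Real.sin_sq_add_cos_sq (Real.arccos c)
    nlinarith [this]
  rw [htr, hdet]
  exact quad_factor μ₁ μ₂
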